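/- If Q is a probability mass function on W = {0,1}^4 satisfying the data-matching constraints sum_{w in W_x} Q(w) = P_{y,d|z} for all x, and if P_{0,0|1} + P_{1,0|1} = 0 (i.e. Prob{D=0|Z=1} = 0), then Q automatically satisfies the monotonicity constraint: Q(y0,y1,1,0) = 0 for all y0,y1 in {0,1}. -/

import Mathlib

open Finset

abbrev W : Type := Fin 2 × Fin 2 × Fin 2 × Fin 2

/-- treatment received given instrument value z: d1 if z=1, d0 if z=0,
i.e. d = d1*z + d0*(1-z) for z ∈ {0,1}. -/
def dsel (z : Fin 2) (w : W) : Fin 2 := if z = 1 then w.2.2.2 else w.2.2.1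

/-- outcome given treatment d: y1 if d=1, y0 if d=0, i.e. y = y1*d + y0*(1-d). -/
def ysel (d : Fin 2) (w : W) : Fin 2 := if d = 1 then w.2.1 else w.1

/-- data-matching constraints: ∑_{w ∈ W_x} Q(w) = P_{y,d|z} for each x=(y,d,z). -/
def DataMatch (Q : W → ℝ) (P : Fin 2 → Fin 2 → Fin 2 → ℝ) : Prop :=
  ∀ y d z : Fin 2,
    ∑ w : W, (if dsel z w = d ∧ ysel d w = y then Q w else 0) = P y d z

/-- Q is a probability mass function on W. -/
def IsPMF (Q : W → ℝ) : Prop := (∀ w : W, 0 ≤ Q w) ∧ ∑ w : W, Q w = 1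

/-- P is a valid conditional distribution of (Y,D) given Z. -/
def PValid (P : Fin 2 → Fin 2 → Fin 2 → ℝ) : Prop :=
  (∀ y d z : Fin 2, 0 ≤ P y d z) ∧ ∀ z : Fin 2, ∑ y : Fin 2, ∑ d : Fin 2, P y d z = 1

/-- instrument monotonicity: no defiers, Q(y0,y1,1,0) = 0. -/
def Mono (Q : W → ℝ) : Prop := ∀ y0 y1 : Fin 2, Q (y0, y1, 1, 0) = 0

theorem stmt_8 (P : Fin 2 → Fin 2 → Fin 2 → ℝ) (Q : W → ℝ)
    (hP : PValid P) (hQ : IsPMF Q) (hD : DataMatch Q P)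
    (h0 : P 0 0 1 + P 1 0 1 = 0) : Mono Q := by
  intro y0 y1
  have h1 := hD 0 0 1
  have h2 := hD 1 0 1
  simp [DataMatch, dsel, ysel, Fin.sum_univ_succ, Fintype.sum_prod_type] at h1 h2
  fin_cases y0 <;> fin_cases y1 <;> simp only [Fin.mk_zero, Fin.mk_one] <;>
    linarith [hQ.1 (0,0,0,0), hQ.1 (0,0,1,0), hQ.1 (0,1,0,0), hQ.1 (0,1,1,0),
      hQ.1 (1,0,0,0), hQ.1 (1,0,1,0), hQ.1 (1,1,0,0), hQ.1 (1,1,1,0)]
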